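/- Let k be an algebraically closed field of characteristic ∉ {2,3,5}. Let R be a k-subalgebra of k[[t]] with 1 ∈ R, t^4·k[[t]] ⊆ R, and dim_k(k[[t]]/R) = 2. Then exactly one of the following holds: (a) R = k ⊕ t^3·k[[t]] (the non-Gorenstein genus-two cusp k[[t^3,t^4,t^5]]), or (b) there exists a continuous k-algebra automorphism φ of k[[t]] such that φ(R) = k ⊕ k·t^2 ⊕ t^4·k[[t]] = k[[t^2,t^5]] (the ramphoid cusp). In particular there are exactly two unibranch curve singularities of genus two up to isomorphism, and only the ramphoid cusp among them is Gorenstein. -/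

import Mathlib

open PowerSeries

variable (k : Type*) [Field k]

/-- Substitution `g ↦ g(u)` for a power series `u` with zero constant term. -/
noncomputable def subst (u g : PowerSeries k) : PowerSeries k :=
  PowerSeries.mk fun m =>
    coeff m (∑ n ∈ Finset.range (m + 1), coeff n g • u ^ n)

variable {k}

lemma coeff_subst' (u g : PowerSeries k) (m : ℕ) :
    coeff m (subst k u g) =
      ∑ n ∈ Finset.range (m + 1), coeff n g * coeff m (u ^ n) := by
  simp [_root_.subst, coeff_mk, map_sum, smul_eq_C_mul, map_mul, coeff_C_mul]

-- truncation lemma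
lemma trunc4 (R : Subalgebra k (PowerSeries k))
    (hR4 : ∀ f : PowerSeries k, X ^ 4 * f ∈ R) (f : PowerSeries k) :
    f - (C (coeff 1 f) * X + C (coeff 2 f) * X ^ 2 + C (coeff 3 f) * X ^ 3) ∈ R := by
  set p := C (coeff 0 f) + (C (coeff 1 f) * X + C (coeff 2 f) * X ^ 2
      + C (coeff 3 f) * X ^ 3) with hp
  have hdvd : (X : PowerSeries k) ^ 4 ∣ (f - p) := by
    rw [X_pow_dvd_iff]
    intro m hm
    interval_cases m <;>
      simp [hp, coeff_C, coeff_X, coeff_X_pow, coeff_C_mul]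
  obtain ⟨h, hh⟩ := hdvd
  have h1 : f - p ∈ R := hh ▸ hR4 h
  have h2 : (C (coeff 0 f) : PowerSeries k) ∈ R := by
    simpa using R.algebraMap_mem (coeff 0 f)
  have := R.sub_mem h1 (R.neg_mem h2)
  convert this using 1
  rw [hp]; ring

lemma scale_mem (R : Subalgebra k (PowerSeries k)) {a : k} (ha : a ≠ 0)
    {f : PowerSeries k} (h : C a * f ∈ R) : f ∈ R := by
  have h2 : (C a⁻¹ : PowerSeries k) ∈ R := by simpa using R.algebraMap_mem a⁻¹
  have := R.mul_mem h2 h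
  rwa [← mul_assoc, ← map_mul, inv_mul_cancel₀ ha, map_one, one_mul] at this


lemma C_mem (R : Subalgebra k (PowerSeries k)) (x : k) : (C x : PowerSeries k) ∈ R := by
  simpa using R.algebraMap_mem x

lemma no_lin (R : Subalgebra k (PowerSeries k))
    (hR4 : ∀ f : PowerSeries k, X ^ 4 * f ∈ R)
    (hdim : Module.finrank k (PowerSeries k ⧸ Subalgebra.toSubmodule R) = 2)
    {a b c : k} (ha : a ≠ 0)
    (hv : C a * X + C b * X ^ 2 + C c * X ^ 3 ∈ R) : False := by
  set v : PowerSeries k := C a * X + C b * X ^ 2 + C c * X ^ 3 with hvdef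
  have hw : C (a*a) * X ^ 2 + C (2*a*b) * X ^ 3 ∈ R := by
    have heq : C (a*a) * X ^ 2 + C (2*a*b) * X ^ 3
        = v * v - X ^ 4 * (C (b*b+2*a*c) + C (2*b*c) * X + C (c*c) * X ^ 2) := by
      simp only [hvdef, map_mul, map_add, map_ofNat]
      ring
    rw [heq]
    exact R.sub_mem (R.mul_mem hv hv) (hR4 _)
  have hx3 : (X : PowerSeries k) ^ 3 ∈ R := by
    apply scale_mem R (show a*a*a ≠ 0 by simp [ha])
    have heq : C (a*a*a) * X ^ 3
        = v * (C (a*a) * X ^ 2 + C (2*a*b) * X ^ 3)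
          - X ^ 4 * (C (3*a*a*b) + C (2*a*b*b + a*a*c) * X + C (2*a*b*c) * X ^ 2) := by
      simp only [hvdef, map_mul, map_add, map_ofNat]
      ring
    rw [heq]
    exact R.sub_mem (R.mul_mem hv hw) (hR4 _)
  have hx2 : (X : PowerSeries k) ^ 2 ∈ R := by
    apply scale_mem R (show a*a ≠ 0 by simp [ha])
    have heq : C (a*a) * X ^ 2
        = (C (a*a) * X ^ 2 + C (2*a*b) * X ^ 3) - C (2*a*b) * X ^ 3 := by ring
    rw [heq]
    exact R.sub_mem hw (R.mul_mem (by simpa using R.algebraMap_mem (2*a*b)) hx3)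
  have hx1 : (X : PowerSeries k) ∈ R := by
    apply scale_mem R ha
    have heq : C a * X = v - C b * X ^ 2 - C c * X ^ 3 := by rw [hvdef]; ring
    rw [heq]
    exact R.sub_mem (R.sub_mem hv (R.mul_mem (by simpa using R.algebraMap_mem b) hx2))
      (R.mul_mem (by simpa using R.algebraMap_mem c) hx3)
  have hall : ∀ f : PowerSeries k, f ∈ R := by
    intro f
    have h1 := trunc4 R hR4 f
    have h2 : C (coeff 1 f) * X + C (coeff 2 f) * X ^ 2 + C (coeff 3 f) * X ^ 3 ∈ R :=
      R.add_mem (R.add_mem (R.mul_mem (by simpa using R.algebraMap_mem _) hx1)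
        (R.mul_mem (by simpa using R.algebraMap_mem _) hx2))
        (R.mul_mem (by simpa using R.algebraMap_mem _) hx3)
    have := R.add_mem h1 h2
    simpa using this
  have htop : Subalgebra.toSubmodule R = ⊤ := by
    ext f; simpa using hall f
  have : Subsingleton (PowerSeries k ⧸ Subalgebra.toSubmodule R) :=
    Submodule.Quotient.subsingleton_iff.2 htop
  rw [Module.finrank_zero_of_subsingleton] at hdim
  exact two_ne_zero hdim.symm

section Quot
variable (R : Subalgebra k (PowerSeries k))

local notation "Q" => PowerSeries k ⧸ Subalgebra.toSubmodule R

noncomputable def m1 : Q := Submodule.Quotient.mk X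
noncomputable def m2 : Q := Submodule.Quotient.mk (X ^ 2)
noncomputable def m3 : Q := Submodule.Quotient.mk (X ^ 3)

lemma mk_rep (hR4 : ∀ f : PowerSeries k, X ^ 4 * f ∈ R) (f : PowerSeries k) :
    (Submodule.Quotient.mk f : Q)
      = coeff 1 f • m1 R + coeff 2 f • m2 R + coeff 3 f • m3 R := by
  have : coeff 1 f • m1 R + coeff 2 f • m2 R + coeff 3 f • m3 R
      = (Submodule.Quotient.mk (C (coeff 1 f) * X + C (coeff 2 f) * X ^ 2
          + C (coeff 3 f) * X ^ 3) : Q) := by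
    simp only [m1, m2, m3, ← Submodule.Quotient.mk_smul, ← Submodule.Quotient.mk_add,
      smul_eq_C_mul]
  rw [this, Submodule.Quotient.eq]
  exact trunc4 R hR4 f

lemma finiteQ (hR4 : ∀ f : PowerSeries k, X ^ 4 * f ∈ R) : Module.Finite k Q := by
  classical
  constructor
  refine ⟨{m1 R, m2 R, m3 R}, ?_⟩
  rw [eq_top_iff]
  rintro x -
  obtain ⟨f, rfl⟩ := Submodule.Quotient.mk_surjective _ x
  rw [mk_rep R hR4 f]
  refine Submodule.add_mem _ (Submodule.add_mem _ ?_ ?_) ?_ <;>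
    exact Submodule.smul_mem _ _ (Submodule.subset_span (by simp))

lemma exists_rel (hR4 : ∀ f : PowerSeries k, X ^ 4 * f ∈ R)
    (hdim : Module.finrank k Q = 2) :
    ∃ b c : k, ¬(b = 0 ∧ c = 0) ∧ C b * X ^ 2 + C c * X ^ 3 ∈ R := by
  have hfin := finiteQ R hR4
  by_contra hno
  push_neg at hno
  have habc : ∀ a b c : k, C a * X + C b * X ^ 2 + C c * X ^ 3 ∈ R →
      a = 0 ∧ b = 0 ∧ c = 0 := by
    intro a b c hmem
    have ha : a = 0 := by
      by_contra ha
      exact no_lin R hR4 hdim ha hmem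
    subst ha
    rw [map_zero, zero_mul, zero_add] at hmem
    have hb : b = 0 ∧ c = 0 := by
      by_contra h'
      exact hno b c (by tauto) hmem
    exact ⟨rfl, hb.1, hb.2⟩
  have hli : LinearIndependent k ![m1 R, m2 R, m3 R] := by
    rw [Fintype.linearIndependent_iff]
    intro g hg
    have hsum : (Submodule.Quotient.mk (C (g 0) * X + C (g 1) * X ^ 2
        + C (g 2) * X ^ 3) : Q) = 0 := by
      rw [← hg]
      simp only [Fin.sum_univ_three, Matrix.cons_val_zero, Matrix.cons_val_one, Matrix.head_cons,
        Matrix.cons_val_two, Matrix.tail_cons]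
      simp only [m1, m2, m3, ← Submodule.Quotient.mk_smul, ← Submodule.Quotient.mk_add,
        smul_eq_C_mul]
    rw [Submodule.Quotient.mk_eq_zero] at hsum
    obtain ⟨h0, h1, h2⟩ := habc _ _ _ hsum
    intro i; fin_cases i <;> assumption
  have := hli.fintype_card_le_finrank
  rw [hdim] at this
  simp at this
end Quot

lemma not_both (R : Subalgebra k (PowerSeries k))
    (hR4 : ∀ f : PowerSeries k, X ^ 4 * f ∈ R)
    (hdim : Module.finrank k (PowerSeries k ⧸ Subalgebra.toSubmodule R) = 2)
    (hx2 : (X : PowerSeries k) ^ 2 ∈ R) (hx3 : (X : PowerSeries k) ^ 3 ∈ R) : False := by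
  classical
  have hm2 : m2 R = 0 := (Submodule.Quotient.mk_eq_zero _).2 hx2
  have hm3 : m3 R = 0 := (Submodule.Quotient.mk_eq_zero _).2 hx3
  have hspan : Submodule.span k ({m1 R} : Set (PowerSeries k ⧸ Subalgebra.toSubmodule R)) = ⊤ := by
    rw [eq_top_iff]
    rintro x -
    obtain ⟨f, rfl⟩ := Submodule.Quotient.mk_surjective _ x
    rw [mk_rep R hR4 f, hm2, hm3]
    simp only [smul_zero, add_zero]
    exact Submodule.smul_mem _ _ (Submodule.mem_span_singleton_self _)
  have h1 : Module.finrank k (PowerSeries k ⧸ Subalgebra.toSubmodule R)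
      ≤ ({m1 R} : Set (PowerSeries k ⧸ Subalgebra.toSubmodule R)).toFinset.card := by
    rw [← finrank_top k, ← hspan]
    exact finrank_span_le_card _
  rw [hdim] at h1
  simp at h1

lemma mem_iff (R : Subalgebra k (PowerSeries k))
    (hR4 : ∀ f : PowerSeries k, X ^ 4 * f ∈ R)
    (hdim : Module.finrank k (PowerSeries k ⧸ Subalgebra.toSubmodule R) = 2)
    {b c : k} (hne : ¬(b = 0 ∧ c = 0)) (hbc : C b * X ^ 2 + C c * X ^ 3 ∈ R)
    (f : PowerSeries k) :
    f ∈ R ↔ coeff 1 f = 0 ∧ c * coeff 2 f = b * coeff 3 f := by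
  constructor
  · intro hf
    have hvf : C (coeff 1 f) * X + C (coeff 2 f) * X ^ 2 + C (coeff 3 f) * X ^ 3 ∈ R := by
      have h1 := trunc4 R hR4 f
      have := R.sub_mem hf h1
      simpa using this
    have h1 : coeff 1 f = 0 := by
      by_contra h
      exact no_lin R hR4 hdim h hvf
    rw [h1, map_zero, zero_mul, zero_add] at hvf
    refine ⟨h1, ?_⟩
    by_contra hdet
    have hx2 : (X : PowerSeries k) ^ 2 ∈ R := by
      apply scale_mem R (show b * coeff 3 f - c * coeff 2 f ≠ 0 from
        sub_ne_zero.2 fun h => hdet h.symm)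
      have heq : C (b * coeff 3 f - c * coeff 2 f) * X ^ 2
          = C (coeff 3 f) * (C b * X ^ 2 + C c * X ^ 3)
            - C c * (C (coeff 2 f) * X ^ 2 + C (coeff 3 f) * X ^ 3) := by
        simp only [map_sub, map_mul]; ring
      rw [heq]
      exact R.sub_mem (R.mul_mem (by simpa using R.algebraMap_mem _) hbc)
        (R.mul_mem (by simpa using R.algebraMap_mem _) hvf)
    have hx3 : (X : PowerSeries k) ^ 3 ∈ R := by
      apply scale_mem R (show c * coeff 2 f - b * coeff 3 f ≠ 0 from sub_ne_zero.2 hdet)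
      have heq : C (c * coeff 2 f - b * coeff 3 f) * X ^ 3
          = C (coeff 2 f) * (C b * X ^ 2 + C c * X ^ 3)
            - C b * (C (coeff 2 f) * X ^ 2 + C (coeff 3 f) * X ^ 3) := by
        simp only [map_sub, map_mul]; ring
      rw [heq]
      exact R.sub_mem (R.mul_mem (by simpa using R.algebraMap_mem _) hbc)
        (R.mul_mem (by simpa using R.algebraMap_mem _) hvf)
    exact not_both R hR4 hdim hx2 hx3
  · rintro ⟨h1, hrel⟩
    have htr := trunc4 R hR4 f
    rw [h1, map_zero, zero_mul, zero_add] at htr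
    have hvf : C (coeff 2 f) * X ^ 2 + C (coeff 3 f) * X ^ 3 ∈ R := by
      by_cases hb : b = 0
      · have hc : c ≠ 0 := fun hc => hne ⟨hb, hc⟩
        have h2 : coeff 2 f = 0 := by
          have := hrel
          rw [hb, zero_mul] at this
          exact (mul_eq_zero.1 this).resolve_left hc
        rw [h2, map_zero, zero_mul, zero_add]
        have : (C (coeff 3 f) * X ^ 3 : PowerSeries k)
            = C (coeff 3 f * c⁻¹) * (C b * X ^ 2 + C c * X ^ 3) := by
          rw [hb, map_zero, zero_mul, zero_add, ← mul_assoc, ← map_mul]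
          congr 2
          field_simp
        rw [this]
        exact R.mul_mem (C_mem R _) hbc
      · have heq : C (coeff 2 f) * X ^ 2 + C (coeff 3 f) * X ^ 3
            = C (coeff 2 f * b⁻¹) * (C b * X ^ 2 + C c * X ^ 3) := by
          have e2 : coeff 2 f * b⁻¹ * b = coeff 2 f := by field_simp
          have e3 : coeff 2 f * b⁻¹ * c = coeff 3 f := by
            field_simp
            linear_combination hrel
          rw [mul_add, ← mul_assoc, ← mul_assoc, ← map_mul, ← map_mul, e2, e3]
        rw [heq]
        exact R.mul_mem (C_mem R _) hbc
    have := R.add_mem htr hvf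
    simpa using this

noncomputable def invCoeff (u f : PowerSeries k) : ℕ → k
  | m => coeff m f - ∑ n ∈ (Finset.range m).attach,
      invCoeff u f n * coeff m (u ^ (n : ℕ))
  termination_by m => m
  decreasing_by exact Finset.mem_range.mp n.2

lemma invCoeff_eq (u f : PowerSeries k) (m : ℕ) :
    invCoeff u f m = coeff m f - ∑ n ∈ Finset.range m, invCoeff u f n * coeff m (u ^ n) := by
  rw [invCoeff]
  congr 1
  exact Finset.sum_attach (Finset.range m) (fun n => invCoeff u f n * coeff m (u ^ n))

lemma sum_invCoeff (u f : PowerSeries k) (hdiag : ∀ m, coeff m (u ^ m) = 1) (m : ℕ) :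
    ∑ n ∈ Finset.range (m + 1), invCoeff u f n * coeff m (u ^ n) = coeff m f := by
  rw [Finset.sum_range_succ, hdiag, mul_one, invCoeff_eq]
  ring

lemma subst_invCoeff (u f : PowerSeries k) (hdiag : ∀ m, coeff m (u ^ m) = 1) :
    subst k u (PowerSeries.mk (invCoeff u f)) = f := by
  ext m
  rw [_root_.coeff_subst']
  simp only [coeff_mk]
  exact sum_invCoeff u f hdiag m

section UCalc
variable (e : k)

lemma u_diag (m : ℕ) : coeff m ((X + C e * X ^ 2) ^ m) = 1 := by
  have h : (X + C e * X ^ 2 : PowerSeries k) ^ m = X ^ m * (1 + C e * X) ^ m := by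
    rw [← mul_pow]; ring_nf
  rw [h]
  have := coeff_X_pow_mul ((1 + C e * X : PowerSeries k) ^ m) m 0
  rw [zero_add] at this
  rw [this]
  simp [coeff_zero_eq_constantCoeff, map_pow]

lemma u_sq : (X + C e * X ^ 2 : PowerSeries k) ^ 2
    = X ^ 2 + C (2 * e) * X ^ 3 + C (e * e) * X ^ 4 := by
  simp only [map_mul, map_ofNat]; ring

lemma u_cube : (X + C e * X ^ 2 : PowerSeries k) ^ 3
    = X ^ 3 + C (3 * e) * X ^ 4 + C (3 * (e * e)) * X ^ 5 + C (e * e * e) * X ^ 6 := by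
  simp only [map_mul, map_ofNat]; ring

lemma u_c0 : coeff 0 (X + C e * X ^ 2) = 0 := by simp
lemma u_c1 : coeff 1 (X + C e * X ^ 2) = 1 := by simp [coeff_C_mul, coeff_X_pow]
lemma u_c2 : coeff 2 (X + C e * X ^ 2) = e := by simp [coeff_C_mul, coeff_X_pow, coeff_X]
lemma u_c3 : coeff 3 (X + C e * X ^ 2) = 0 := by simp [coeff_C_mul, coeff_X_pow, coeff_X]
lemma u_sq_c3 : coeff 3 ((X + C e * X ^ 2) ^ 2) = 2 * e := by
  rw [u_sq]; simp [coeff_C_mul, coeff_X_pow, mul_assoc]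
lemma u_cube_c3 : coeff 3 ((X + C e * X ^ 2) ^ 3) = 1 := by
  rw [u_cube]; simp [coeff_C_mul, coeff_X_pow, mul_assoc]

end UCalc

section Inv
variable (e : k) (f : PowerSeries k)

lemma inv1 : invCoeff (X + C e * X ^ 2) f 1 = coeff 1 f := by
  rw [invCoeff_eq, Finset.sum_range_one]
  simp [coeff_one]

lemma inv2 : invCoeff (X + C e * X ^ 2) f 2
    = coeff 2 f - invCoeff (X + C e * X ^ 2) f 1 * e := by
  rw [invCoeff_eq, Finset.sum_range_succ, Finset.sum_range_one]
  simp [coeff_one, u_c2]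

lemma inv3 : invCoeff (X + C e * X ^ 2) f 3
    = coeff 3 f - invCoeff (X + C e * X ^ 2) f 2 * (2 * e) := by
  rw [invCoeff_eq, Finset.sum_range_succ, Finset.sum_range_succ, Finset.sum_range_one]
  simp [coeff_one, pow_one, u_c3, u_sq_c3]

end Inv


/-- over an algebraically closed field of characteristic ∉ {2,3,5},
a subalgebra `R ⊆ k[[t]]` with `t⁴·k[[t]] ⊆ R` and `dim_k(k[[t]]/R) = 2` is
either the non-Gorenstein cusp `k ⊕ t³k[[t]] = k[[t³,t⁴,t⁵]]`, or is carried by a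
continuous automorphism of `k[[t]]` onto the ramphoid cusp `k[[t²,t⁵]]` —
and exactly one of the two alternatives holds. -/
theorem stmt_16 [IsAlgClosed k] (h2 : (2 : k) ≠ 0) (h3 : (3 : k) ≠ 0) (h5 : (5 : k) ≠ 0)
    (R : Subalgebra k (PowerSeries k))
    (hR4 : ∀ f : PowerSeries k, X ^ 4 * f ∈ R)
    (hdim : Module.finrank k (PowerSeries k ⧸ Subalgebra.toSubmodule R) = 2) :
    Xor'
      ((R : Set (PowerSeries k)) =
        {f : PowerSeries k | coeff 1 f = 0 ∧ coeff 2 f = 0})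
      (∃ u : PowerSeries k, coeff 0 u = 0 ∧ IsUnit (coeff 1 u) ∧
        (fun g => subst k u g) '' (R : Set (PowerSeries k)) =
          {f : PowerSeries k | coeff 1 f = 0 ∧ coeff 3 f = 0}) := by
  obtain ⟨b, c, hne, hbc⟩ := exists_rel R hR4 hdim
  have hchar := mem_iff R hR4 hdim hne hbc
  by_cases hb : b = 0
  · -- non-Gorenstein cusp case
    have hc : c ≠ 0 := fun h => hne ⟨hb, h⟩
    left
    constructor
    · ext f
      simp only [SetLike.mem_coe, Set.mem_setOf_eq]
      rw [hchar f, hb]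
      constructor
      · rintro ⟨hf1, hf2⟩
        rw [zero_mul] at hf2
        exact ⟨hf1, (mul_eq_zero.1 hf2).resolve_left hc⟩
      · rintro ⟨hf1, hf2⟩
        rw [hf2, mul_zero, zero_mul]
        exact ⟨hf1, rfl⟩
    · rintro ⟨u, hu0, hu1, himg⟩
      have hX2 : (X : PowerSeries k) ^ 2 ∈
          {f : PowerSeries k | coeff 1 f = 0 ∧ coeff 3 f = 0} := by
        constructor <;> simp [coeff_X_pow]
      rw [← himg] at hX2
      obtain ⟨g, hg, hgeq⟩ := hX2
      have hgm := (hchar g).1 hg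
      have h2g : coeff 2 g = 0 := by
        have := hgm.2
        rw [hb, zero_mul] at this
        exact (mul_eq_zero.1 this).resolve_left hc
      have hz : coeff 2 (subst k u g) = 0 := by
        rw [_root_.coeff_subst', Finset.sum_range_succ, Finset.sum_range_succ, Finset.sum_range_one]
        simp [hgm.1, h2g, coeff_one]
      change subst k u g = X ^ 2 at hgeq
      rw [hgeq] at hz
      simp [coeff_X_pow] at hz
  · -- ramphoid cusp case
    right
    refine ⟨?_, ?_⟩
    · set e : k := -(c / (2 * b)) with he
      have h2e : 2 * e = -(c / b) := by
        rw [he]; field_simp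
      refine ⟨X + C e * X ^ 2, u_c0 e, by rw [u_c1]; exact isUnit_one, ?_⟩
      ext f
      simp only [Set.mem_image, SetLike.mem_coe, Set.mem_setOf_eq]
      constructor
      · rintro ⟨g, hg, rfl⟩
        have hgm := (hchar g).1 hg
        constructor
        · rw [_root_.coeff_subst', Finset.sum_range_succ, Finset.sum_range_one]
          simp [hgm.1, coeff_one]
        · rw [_root_.coeff_subst', Finset.sum_range_succ, Finset.sum_range_succ,
            Finset.sum_range_succ, Finset.sum_range_one]
          simp only [pow_zero, pow_one, coeff_one, u_c3, u_sq_c3, u_cube_c3, hgm.1]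
          rw [h2e]
          have hrel := hgm.2
          rw [if_neg (by norm_num : (3:ℕ) ≠ 0)]
          field_simp
          linear_combination -hrel
      · rintro ⟨hf1, hf3⟩
        refine ⟨PowerSeries.mk (invCoeff (X + C e * X ^ 2) f), ?_,
          subst_invCoeff _ f (u_diag e)⟩
        have e1 : coeff 1 (PowerSeries.mk (invCoeff (X + C e * X ^ 2) f)) = 0 := by
          rw [coeff_mk, inv1, hf1]
        have e2 : coeff 2 (PowerSeries.mk (invCoeff (X + C e * X ^ 2) f))
            = coeff 2 f := by
          rw [coeff_mk, inv2, inv1, hf1, zero_mul, sub_zero]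
        have e3 : coeff 3 (PowerSeries.mk (invCoeff (X + C e * X ^ 2) f))
            = coeff 2 f * (c / b) := by
          rw [coeff_mk, inv3, inv2, inv1, hf1, zero_mul, sub_zero, hf3, zero_sub, h2e]
          ring
        exact (hchar _).2 ⟨e1, by rw [e2, e3]; field_simp⟩
    · intro hA
      have hmem : (C b * X ^ 2 + C c * X ^ 3 : PowerSeries k) ∈
          {f : PowerSeries k | coeff 1 f = 0 ∧ coeff 2 f = 0} := hA ▸ hbc
      have : coeff 2 (C b * X ^ 2 + C c * X ^ 3 : PowerSeries k) = b := by
        simp [coeff_C_mul, coeff_X_pow]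
      exact hb (this.symm.trans hmem.2)
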